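/- Let θ₁ > θ₂ > 0. Then for every x > 0, G(x;θ₁) ≥ G(x;θ₂), where G(x;θ) = 1 − (1 + θx/(θ+3))·e^{-θx}; that is, i-Garima(θ₁) is stochastically smaller than i-Garima(θ₂). -/

import Mathlib

/-- Stochastic order: for θ₁ > θ₂ > 0 and x > 0, G(x;θ₁) ≥ G(x;θ₂), i.e.
i-Garima(θ₁) is stochastically smaller than i-Garima(θ₂). -/
theorem iGarima_stochastic_order (θ₁ θ₂ : ℝ) (hθ₂ : 0 < θ₂) (h : θ₂ < θ₁)
    (x : ℝ) (hx : 0 < x) :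
    1 - (1 + θ₂ * x / (θ₂ + 3)) * Real.exp (-θ₂ * x)
      ≤ 1 - (1 + θ₁ * x / (θ₁ + 3)) * Real.exp (-θ₁ * x) := by
  have key : ∀ θ : ℝ, 0 < θ →
      HasDerivAt (fun t : ℝ => (1 + t * x / (t + 3)) * Real.exp (-t * x))
        ((3 * x / (θ + 3) ^ 2) * Real.exp (-θ * x)
          + (1 + θ * x / (θ + 3)) * (-x * Real.exp (-θ * x))) θ := by
    intro θ hθ
    have hne : θ + 3 ≠ 0 := by linarith
    have h1 : HasDerivAt (fun t : ℝ => t * x / (t + 3))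
        ((x * (θ + 3) - θ * x * 1) / (θ + 3) ^ 2) θ := by
      exact (((hasDerivAt_id θ).mul_const x).div
        ((hasDerivAt_id θ).add_const 3) hne).congr_deriv (by simp)
    have h1' : HasDerivAt (fun t : ℝ => 1 + t * x / (t + 3))
        (3 * x / (θ + 3) ^ 2) θ := by
      have := h1.const_add 1
      exact this.congr_deriv (by ring)
    have h2 : HasDerivAt (fun t : ℝ => Real.exp (-t * x))
        (-x * Real.exp (-θ * x)) θ := by
      have hlin : HasDerivAt (fun t : ℝ => -t * x) (-x) θ := by
        simpa using ((hasDerivAt_id θ).neg.mul_const x)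
      exact ((Real.hasDerivAt_exp (-θ * x)).comp θ hlin).congr_deriv (by ring : _ = -x * Real.exp (-θ * x))
    exact h1'.mul h2
  have anti : StrictAntiOn (fun t : ℝ => (1 + t * x / (t + 3)) * Real.exp (-t * x))
      (Set.Ioi 0) := by
    apply StrictAntiOn.mono (s := Set.Ici (0:ℝ)) ?_ Set.Ioi_subset_Ici_self
    apply strictAntiOn_of_deriv_neg (convex_Ici 0)
    · apply ContinuousOn.mul
      · apply ContinuousOn.add continuousOn_const
        apply ContinuousOn.div (by fun_prop) (by fun_prop)
        intro t ht
        simp only [Set.mem_Ici] at ht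
        intro hc; nlinarith
      · fun_prop
    · intro θ hθ
      rw [interior_Ici] at hθ
      simp only [Set.mem_Ioi] at hθ
      rw [(key θ hθ).deriv]
      have he : 0 < Real.exp (-θ * x) := Real.exp_pos _
      have h1 : 3 * x / (θ + 3) ^ 2 < x := by
        rw [div_lt_iff₀ (by nlinarith)]
        nlinarith [mul_pos hx hθ, mul_pos (mul_pos hx hθ) hθ]
      have h2 : 0 ≤ θ * x / (θ + 3) := by positivity
      nlinarith [mul_pos hx he, mul_nonneg h2 he.le]
  have := anti (Set.mem_Ioi.mpr hθ₂) (Set.mem_Ioi.mpr (hθ₂.trans h)) h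
  simp only at this
  linarith
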